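/- Let k be a field, α ∈ k \ k₀ where k₀ is the prime subfield, and M = (n q; m r) an integer matrix whose determinant is nonzero in k. Set β = (nα + q)/(mα + r). Then y^r z^m and y^q z^n are algebraically independent over k in k(y,z), and the assignment x' ↦ (mα+r)^{-1} x, y' ↦ y^r z^m, z' ↦ y^q z^n preserves the Lie-bracket relations: [x', y'] = y', [x', z'] = βz', [y', z'] = 0 hold for the images in the fraction skewfield K(𝔤_α) = k(y,z)(x; D_α). -/
import Mathlib


theorem aux_zpow_comm {k : Type*} [Field k] {D : Type*} [DivisionRing D] [Algebra k D]
    (x : D) {w : D} {a : k} (hw : w ≠ 0) (h : x * w = w * x + algebraMap k D a * w) :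
    ∀ t : ℤ, x * w ^ t = w ^ t * x + algebraMap k D ((t : k) * a) * w ^ t := by
  have key : ∀ (w : D), ∀ (a : k), x * w = w * x + algebraMap k D a * w →
      ∀ s : ℕ, x * w ^ s = w ^ s * x + algebraMap k D ((s : k) * a) * w ^ s := by
    intro w a h s
    induction s with
    | zero => simp
    | succ s ih =>
      have e1 : x * w ^ (s+1) = (x * w ^ s) * w := by rw [pow_succ, ← mul_assoc]
      have e2 : (x * w ^ s) * w
          = w ^ s * (x * w) + algebraMap k D ((s:k) * a) * w ^ (s+1) := by
        rw [ih, add_mul, mul_assoc, mul_assoc, pow_succ]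
      have e3 : w ^ s * (x * w) = w ^ (s+1) * x + algebraMap k D a * w ^ (s+1) := by
        rw [h, mul_add, pow_succ, mul_assoc, ← mul_assoc (w^s) (algebraMap k D a) w,
          ← Algebra.commutes a (w ^ s), mul_assoc, ← pow_succ]
      have e4 : algebraMap k D (((s:ℕ)+1 : k) * a)
          = algebraMap k D ((s:k) * a) + algebraMap k D a := by
        rw [← map_add]; congr 1; ring
      rw [e1, e2, e3, Nat.cast_add_one, e4, add_mul]
      abel
  intro t
  rcases le_or_gt 0 t with ht | ht
  · lift t to ℕ using ht
    rw [zpow_natCast]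
    have := key w a h t
    rwa [Int.cast_natCast]
  · have hinv : x * w⁻¹ = w⁻¹ * x + algebraMap k D (-a) * w⁻¹ := by
      have h2 : w⁻¹ * (x * w) * w⁻¹ = w⁻¹ * (w * x + algebraMap k D a * w) * w⁻¹ := by rw [h]
      have hl : w⁻¹ * (x * w) * w⁻¹ = w⁻¹ * x := by
        rw [mul_assoc, mul_assoc, mul_inv_cancel₀ hw, mul_one]
      have hr : w⁻¹ * (w * x + algebraMap k D a * w) * w⁻¹
          = x * w⁻¹ + algebraMap k D a * w⁻¹ := by
        rw [mul_add, add_mul, ← mul_assoc, inv_mul_cancel₀ hw, one_mul]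
        congr 1
        rw [Algebra.commutes a w, ← mul_assoc w⁻¹ w, inv_mul_cancel₀ hw, one_mul]
      rw [hl, hr] at h2
      rw [map_neg, neg_mul, h2]
      abel
    obtain ⟨s, rfl⟩ : ∃ s : ℕ, t = -(s:ℤ) := ⟨(-t).toNat, by omega⟩
    rw [zpow_neg, zpow_natCast, ← inv_pow]
    have : ((s:ℕ) : k) * (-a) = (((-(s:ℕ) : ℤ)) : k) * a := by push_cast; ring
    rw [key w⁻¹ (-a) hinv s, this]

theorem aux_indep {k : Type*} [Field k] {F : Type*} [Field F] [Algebra k F]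
    (Y Z : F) (hY : Y ≠ 0) (hZ : Z ≠ 0)
    (hinj : ∀ P : MvPolynomial (Fin 2) k, (MvPolynomial.aeval ![Y, Z]) P = 0 → P = 0)
    (n q m r : ℤ) (hdet : n * r - q * m ≠ 0) :
    AlgebraicIndependent k ![Y ^ r * Z ^ m, Y ^ q * Z ^ n] := by
  classical
  rw [algebraicIndependent_iff]
  intro p hp
  set A : (Fin 2 →₀ ℕ) → ℤ := fun e => r * e 0 + q * e 1 with hA
  set B : (Fin 2 →₀ ℕ) → ℤ := fun e => m * e 0 + n * e 1 with hB
  set N : ℕ := p.support.sup (fun e => (-(A e)).toNat ⊔ (-(B e)).toNat) with hN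
  have hAN : ∀ e ∈ p.support, 0 ≤ A e + N := by
    intro e he
    have h1 := Finset.le_sup (f := fun e => (-(A e)).toNat ⊔ (-(B e)).toNat) he
    have h2 : (-(A e)).toNat ≤ N := le_trans le_sup_left h1
    omega
  have hBN : ∀ e ∈ p.support, 0 ≤ B e + N := by
    intro e he
    have h1 := Finset.le_sup (f := fun e => (-(A e)).toNat ⊔ (-(B e)).toNat) he
    have h2 : (-(B e)).toNat ≤ N := le_trans le_sup_right h1
    omega
  set me : (Fin 2 →₀ ℕ) → (Fin 2 →₀ ℕ) :=
    fun e => Finsupp.single 0 (A e + N).toNat + Finsupp.single 1 (B e + N).toNat with hme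
  have hme0 : ∀ e, me e 0 = (A e + N).toNat := by
    intro e; simp [hme, Finsupp.single_apply]
  have hme1 : ∀ e, me e 1 = (B e + N).toNat := by
    intro e; simp [hme, Finsupp.single_apply]
  have hinj2 : ∀ e ∈ p.support, ∀ e' ∈ p.support, me e = me e' → e = e' := by
    intro e he e' he' hmee
    have h0 : (A e + N).toNat = (A e' + N).toNat := by rw [← hme0 e, ← hme0 e', hmee]
    have h1 : (B e + N).toNat = (B e' + N).toNat := by rw [← hme1 e, ← hme1 e', hmee]
    have hAe : A e = A e' := by have := hAN e he; have := hAN e' he'; omega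
    have hBe : B e = B e' := by have := hBN e he; have := hBN e' he'; omega
    simp only [hA] at hAe
    simp only [hB] at hBe
    have hd0 : (n * r - q * m) * ((e 0 : ℤ) - e' 0) = 0 := by
      linear_combination n * hAe - q * hBe
    have hd1 : (n * r - q * m) * ((e 1 : ℤ) - e' 1) = 0 := by
      linear_combination r * hBe - m * hAe
    have he0 : (e 0 : ℤ) = e' 0 := by
      rcases mul_eq_zero.mp hd0 with h | h
      exacts [absurd h hdet, by omega]
    have he1 : (e 1 : ℤ) = e' 1 := by
      rcases mul_eq_zero.mp hd1 with h | h
      exacts [absurd h hdet, by omega]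
    ext i
    fin_cases i
    · exact_mod_cast he0
    · exact_mod_cast he1
  have hmon : ∀ (i j : ℕ) (c : k),
      (MvPolynomial.aeval ![Y, Z])
        (MvPolynomial.monomial (Finsupp.single 0 i + Finsupp.single (1 : Fin 2) j) c)
        = algebraMap k F c * Y ^ i * Z ^ j := by
    intro i j c
    rw [MvPolynomial.monomial_single_add,
      show (Finsupp.single (1 : Fin 2) j) = Finsupp.single (1 : Fin 2) j + 0 from
        (add_zero _).symm,
      MvPolynomial.monomial_single_add, map_mul, map_mul,
      map_pow, map_pow, MvPolynomial.aeval_X, MvPolynomial.aeval_X,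
      show (MvPolynomial.monomial (0 : Fin 2 →₀ ℕ) c) = MvPolynomial.C c from by
        rw [MvPolynomial.monomial_zero'],
      MvPolynomial.aeval_C]
    simp only [Matrix.cons_val_zero, Matrix.cons_val_one, Matrix.head_cons]
    ring
  have hterm : ∀ e : Fin 2 →₀ ℕ,
      (Y ^ r * Z ^ m) ^ (e 0) * (Y ^ q * Z ^ n) ^ (e 1) = Y ^ A e * Z ^ B e := by
    intro e
    rw [← zpow_natCast (Y ^ r * Z ^ m) (e 0), ← zpow_natCast (Y ^ q * Z ^ n) (e 1),
      mul_zpow, mul_zpow, ← zpow_mul, ← zpow_mul, ← zpow_mul, ← zpow_mul]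
    simp only [hA, hB]
    rw [zpow_add₀ hY, zpow_add₀ hZ]
    ring
  have hps : (MvPolynomial.aeval ![Y ^ r * Z ^ m, Y ^ q * Z ^ n]) p
      = ∑ e ∈ p.support, algebraMap k F (MvPolynomial.coeff e p) * (Y ^ A e * Z ^ B e) := by
    rw [MvPolynomial.aeval_def, MvPolynomial.eval₂_eq']
    refine Finset.sum_congr rfl fun e he => ?_
    rw [Fin.prod_univ_two]
    simp only [Matrix.cons_val_zero, Matrix.cons_val_one, Matrix.head_cons]
    rw [hterm e]
  set P : MvPolynomial (Fin 2) k :=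
    ∑ e ∈ p.support, MvPolynomial.monomial (me e) (MvPolynomial.coeff e p) with hP
  have hPval : (MvPolynomial.aeval ![Y, Z]) P
      = Y ^ (N : ℤ) * Z ^ (N : ℤ) * ((MvPolynomial.aeval ![Y ^ r * Z ^ m, Y ^ q * Z ^ n]) p) := by
    rw [hP, map_sum, hps, Finset.mul_sum]
    refine Finset.sum_congr rfl fun e he => ?_
    rw [hme, hmon]
    rw [← zpow_natCast Y (A e + N).toNat, ← zpow_natCast Z (B e + N).toNat,
      Int.toNat_of_nonneg (hAN e he), Int.toNat_of_nonneg (hBN e he),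
      zpow_add₀ hY, zpow_add₀ hZ]
    ring
  have hP0 : P = 0 := hinj P (by rw [hPval, hp, mul_zero])
  have hco : ∀ e ∈ p.support, MvPolynomial.coeff e p = 0 := by
    intro e he
    have hcc : MvPolynomial.coeff (me e) P = MvPolynomial.coeff e p := by
      rw [hP, MvPolynomial.coeff_sum]
      rw [Finset.sum_eq_single e]
      · rw [MvPolynomial.coeff_monomial, if_pos rfl]
      · intro e' he' hne
        rw [MvPolynomial.coeff_monomial,
          if_neg (fun hcon => hne (hinj2 e' he' e he hcon))]
      · intro h; exact absurd he h
    rw [hP0] at hcc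
    simpa using hcc.symm
  ext e
  by_cases he : e ∈ p.support
  · simpa using hco e he
  · simpa using MvPolynomial.notMem_support_iff.mp he

/-- Let `k` be a field, `α ∈ k \ k₀` (where `k₀` is the prime subfield, whose
elements are the ratios of integers), and `M = (n q; m r)` an integer matrix whose determinant
is nonzero in `k`; set `β = (nα + q)/(mα + r)`. Then:
(a) `y^r z^m` and `y^q z^n` are algebraically independent over `k` in `k(y,z)`; and
(b) the assignment `x' ↦ (mα+r)⁻¹ x`, `y' ↦ y^r z^m`, `z' ↦ y^q z^n` preserves the Lie-bracket
relations `[x',y'] = y'`, `[x',z'] = βz'`, `[y',z'] = 0` in the skewfield of fractions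
`K(𝔤_α)` (stated in any division ring over `k` containing elements `x, y, z` satisfying the
defining relations of `K(𝔤_α)` with `y, z ≠ 0`). -/
theorem monomial_embedding (k : Type*) [Field k] (α : k)
    (hα : ∀ a b : ℤ, (b : k) ≠ 0 → α ≠ (a : k) / (b : k))
    (n q m r : ℤ) (hdet : ((n * r - q * m : ℤ) : k) ≠ 0)
    (β : k) (hβ : β = ((n : k) * α + (q : k)) / ((m : k) * α + (r : k))) :
    (AlgebraicIndependent k
      ![(algebraMap (MvPolynomial (Fin 2) k) (FractionRing (MvPolynomial (Fin 2) k))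
            (MvPolynomial.X 0)) ^ r *
          (algebraMap (MvPolynomial (Fin 2) k) (FractionRing (MvPolynomial (Fin 2) k))
            (MvPolynomial.X 1)) ^ m,
        (algebraMap (MvPolynomial (Fin 2) k) (FractionRing (MvPolynomial (Fin 2) k))
            (MvPolynomial.X 0)) ^ q *
          (algebraMap (MvPolynomial (Fin 2) k) (FractionRing (MvPolynomial (Fin 2) k))
            (MvPolynomial.X 1)) ^ n]) ∧
    ∀ (D : Type) [DivisionRing D] [Algebra k D] (x y z : D),
      y ≠ 0 → z ≠ 0 → y * z = z * y → x * y - y * x = y →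
      x * z - z * x = algebraMap k D α * z →
      let x' : D := (algebraMap k D ((m : k) * α + (r : k)))⁻¹ * x
      let y' : D := y ^ r * z ^ m
      let z' : D := y ^ q * z ^ n
      x' * y' - y' * x' = y' ∧ x' * z' - z' * x' = algebraMap k D β * z' ∧
        y' * z' - z' * y' = 0 := by
  have hdetZ : n * r - q * m ≠ 0 := fun h => hdet (by rw [h]; exact Int.cast_zero)
  constructor
  · -- part (a)
    refine aux_indep _ _ ?_ ?_ ?_ n q m r hdetZ
    · rw [map_ne_zero_iff _ (IsFractionRing.injective _ _)]
      exact MvPolynomial.X_ne_zero 0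
    · rw [map_ne_zero_iff _ (IsFractionRing.injective _ _)]
      exact MvPolynomial.X_ne_zero 1
    · intro P hP
      have h1 : ![algebraMap (MvPolynomial (Fin 2) k) (FractionRing (MvPolynomial (Fin 2) k))
            (MvPolynomial.X 0),
          algebraMap (MvPolynomial (Fin 2) k) (FractionRing (MvPolynomial (Fin 2) k))
            (MvPolynomial.X 1)]
          = (algebraMap (MvPolynomial (Fin 2) k) (FractionRing (MvPolynomial (Fin 2) k)))
              ∘ MvPolynomial.X := by
        funext i; fin_cases i <;> rfl
      rw [h1, MvPolynomial.aeval_algebraMap_apply, MvPolynomial.aeval_X_left_apply] at hP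
      exact IsFractionRing.injective (MvPolynomial (Fin 2) k)
        (FractionRing (MvPolynomial (Fin 2) k)) (hP.trans (map_zero _).symm)
  · -- part (b)
    intro D _ _ x y z hy hz hyz hxy hxz x' y' z'
    have hs : ((m : k) * α + (r : k)) ≠ 0 := by
      intro h0
      by_cases hm : (m : k) = 0
      · have hr : (r : k) = 0 := by rwa [hm, zero_mul, zero_add] at h0
        apply hdet
        push_cast
        rw [hr, hm, mul_zero, mul_zero, sub_zero]
      · exact hα (-r) m hm (by
          rw [eq_div_iff hm]
          push_cast
          linear_combination h0)
    have hy1 : x * y = y * x + algebraMap k D 1 * y := by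
      rw [map_one, one_mul]; exact eq_add_of_sub_eq' hxy
    have hz1 : x * z = z * x + algebraMap k D α * z := eq_add_of_sub_eq' hxz
    have hw : ∀ a b : ℤ, x * (y ^ a * z ^ b)
        = (y ^ a * z ^ b) * x
          + algebraMap k D ((b : k) * α + (a : k)) * (y ^ a * z ^ b) := by
      intro a b
      have h1 := aux_zpow_comm x hy hy1 a
      have h2 := aux_zpow_comm x hz hz1 b
      calc x * (y ^ a * z ^ b) = (x * y ^ a) * z ^ b := (mul_assoc _ _ _).symm
        _ = (y ^ a * x) * z ^ b
              + algebraMap k D ((a : k) * 1) * (y ^ a * z ^ b) := by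
            rw [h1, add_mul, mul_assoc (algebraMap k D ((a : k) * 1)) (y ^ a) (z ^ b)]
        _ = y ^ a * (x * z ^ b)
              + algebraMap k D ((a : k) * 1) * (y ^ a * z ^ b) := by
            rw [mul_assoc (y ^ a) x (z ^ b)]
        _ = y ^ a * (z ^ b * x) + y ^ a * (algebraMap k D ((b : k) * α) * z ^ b)
              + algebraMap k D ((a : k) * 1) * (y ^ a * z ^ b) := by
            rw [h2, mul_add]
        _ = (y ^ a * z ^ b) * x + algebraMap k D ((b : k) * α) * (y ^ a * z ^ b)
              + algebraMap k D ((a : k) * 1) * (y ^ a * z ^ b) := by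
            rw [← mul_assoc, ← mul_assoc, ← Algebra.commutes ((b : k) * α) (y ^ a),
              mul_assoc (algebraMap k D ((b : k) * α)) (y ^ a) (z ^ b)]
        _ = (y ^ a * z ^ b) * x
              + algebraMap k D ((b : k) * α + (a : k)) * (y ^ a * z ^ b) := by
            rw [mul_one, add_assoc, ← add_mul, ← map_add]
    have hbr : ∀ a b : ℤ, x' * (y ^ a * z ^ b) - (y ^ a * z ^ b) * x'
        = algebraMap k D (((b : k) * α + (a : k)) / ((m : k) * α + (r : k)))
            * (y ^ a * z ^ b) := by
      intro a b
      have hx'd : x' = algebraMap k D ((m : k) * α + (r : k))⁻¹ * x := by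
        show (algebraMap k D ((m : k) * α + (r : k)))⁻¹ * x = _
        rw [map_inv₀]
      rw [hx'd]
      have e1 : (y ^ a * z ^ b) * (algebraMap k D ((m : k) * α + (r : k))⁻¹ * x)
          = algebraMap k D ((m : k) * α + (r : k))⁻¹ * ((y ^ a * z ^ b) * x) := by
        rw [← mul_assoc, ← Algebra.commutes, mul_assoc]
      have hsub : x * (y ^ a * z ^ b) - (y ^ a * z ^ b) * x
          = algebraMap k D ((b : k) * α + (a : k)) * (y ^ a * z ^ b) := by
        rw [hw a b, add_sub_cancel_left]
      rw [mul_assoc, e1, ← mul_sub, hsub, ← mul_assoc, ← map_mul, inv_mul_eq_div]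
    refine ⟨?_, ?_, ?_⟩
    · show x' * (y ^ r * z ^ m) - (y ^ r * z ^ m) * x' = y ^ r * z ^ m
      rw [hbr r m, div_self hs, map_one, one_mul]
    · show x' * (y ^ q * z ^ n) - (y ^ q * z ^ n) * x'
        = algebraMap k D β * (y ^ q * z ^ n)
      rw [hbr q n, hβ]
    · show (y ^ r * z ^ m) * (y ^ q * z ^ n) - (y ^ q * z ^ n) * (y ^ r * z ^ m) = 0
      have hc : Commute y z := hyz
      have h1 : Commute (y ^ r * z ^ m) (y ^ q * z ^ n) :=
        Commute.mul_left
          (Commute.mul_right ((Commute.refl y).zpow_zpow₀ r q) (hc.zpow_zpow₀ r n))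
          (Commute.mul_right (hc.symm.zpow_zpow₀ m q) ((Commute.refl z).zpow_zpow₀ m n))
      exact sub_eq_zero_of_eq h1.eq
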